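/- Let γ = (γ_k)_{k∈ℤ} be a bounded sequence of complex numbers with q₁(γ) < ∞. Then there exists a constant C > 0, independent of γ and m, such that for every m ∈ ℤ one has sup_{k∈ℤ} |k·(γ_k − γ_{k+m})| ≤ C·m²·q₁(γ). -/

import Mathlib

/-- The norm `q₁(γ) = sup_k |γ_k| + sup_k |k·(Δγ)_k|`, where `(Δγ)_k = γ_k - γ_{k+1}`. -/
noncomputable def q1 (γ : ℤ → ℂ) : ℝ :=
  (⨆ k : ℤ, ‖γ k‖) + ⨆ k : ℤ, ‖(k : ℂ) * (γ k - γ (k + 1))‖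

lemma tel (γ : ℤ → ℂ) (k : ℤ) (n : ℕ) :
    ‖γ k - γ (k + (n : ℤ))‖ ≤ ∑ i ∈ Finset.range n, ‖γ (k + i) - γ (k + i + 1)‖ := by
  induction n with
  | zero => simp
  | succ n ih =>
    rw [Finset.sum_range_succ]
    have harg : (k + ((n + 1 : ℕ) : ℤ)) = k + (n : ℤ) + 1 := by push_cast; ring
    rw [harg]
    have hsplit : γ k - γ (k + (n : ℤ) + 1) =
        (γ k - γ (k + (n : ℤ))) + (γ (k + (n : ℤ)) - γ (k + (n : ℤ) + 1)) := by ring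
    rw [hsplit]
    exact (norm_add_le _ _).trans (add_le_add_left ih _)

lemma step (γ : ℤ → ℂ) (B : ℝ) (hB : ∀ j : ℤ, ‖(j : ℂ) * (γ j - γ (j + 1))‖ ≤ B)
    (c : ℝ) (hc : 0 < c) (j : ℤ) (hj : c ≤ |(j : ℝ)|) :
    ‖γ j - γ (j + 1)‖ ≤ B / c := by
  have hjn : ‖(j : ℂ)‖ = |(j : ℝ)| := by simp
  have hj0 : (0 : ℝ) < ‖(j : ℂ)‖ := by rw [hjn]; linarith
  calc ‖γ j - γ (j + 1)‖ = ‖(j : ℂ) * (γ j - γ (j + 1))‖ / ‖(j : ℂ)‖ := by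
        rw [norm_mul, mul_comm, mul_div_assoc, div_self hj0.ne', mul_one]
    _ ≤ B / c := div_le_div₀ ((norm_nonneg _).trans (hB j)) (hB j) hc (hjn ▸ hj)

lemma block (γ : ℤ → ℂ) (B : ℝ) (hB : ∀ j : ℤ, ‖(j : ℂ) * (γ j - γ (j + 1))‖ ≤ B)
    (k0 : ℤ) (n : ℕ) (c : ℝ) (hc : 0 < c)
    (hj : ∀ i : ℕ, i < n → c ≤ |((k0 + i : ℤ) : ℝ)|) :
    ‖γ k0 - γ (k0 + (n : ℤ))‖ ≤ n * (B / c) := by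
  refine (tel γ k0 n).trans ?_
  calc ∑ i ∈ Finset.range n, ‖γ (k0 + i) - γ (k0 + i + 1)‖
      ≤ ∑ _i ∈ Finset.range n, (B / c) :=
        Finset.sum_le_sum fun i hi => step γ B hB c hc (k0 + i) (hj i (Finset.mem_range.1 hi))
    _ = n * (B / c) := by simp [Finset.sum_const, mul_comm]

/-- If `γ` is a bounded sequence with `q₁(γ) < ∞` (i.e. both sups defining `q₁(γ)` are
finite), then there is a constant `C > 0`, independent of `γ` and `m`, such that
`sup_k |k·(γ_k − γ_{k+m})| ≤ C·m²·q₁(γ)` for all `m ∈ ℤ`. -/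
theorem stmt0 :
    ∃ C > (0 : ℝ), ∀ γ : ℤ → ℂ,
      BddAbove (Set.range fun k : ℤ => ‖γ k‖) →
      BddAbove (Set.range fun k : ℤ => ‖(k : ℂ) * (γ k - γ (k + 1))‖) →
      ∀ m k : ℤ, ‖(k : ℂ) * (γ k - γ (k + m))‖ ≤ C * (m : ℝ) ^ 2 * q1 γ := by
  refine ⟨4, by norm_num, fun γ hAbdd hBbdd m k => ?_⟩
  set A : ℝ := ⨆ k : ℤ, ‖γ k‖ with hAdef
  set B : ℝ := ⨆ k : ℤ, ‖(k : ℂ) * (γ k - γ (k + 1))‖ with hBdef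
  have hA : ∀ j : ℤ, ‖γ j‖ ≤ A := fun j => le_ciSup hAbdd j
  have hB : ∀ j : ℤ, ‖(j : ℂ) * (γ j - γ (j + 1))‖ ≤ B := fun j => le_ciSup hBbdd j
  have hA0 : 0 ≤ A := (norm_nonneg _).trans (hA 0)
  have hB0 : 0 ≤ B := (norm_nonneg _).trans (hB 0)
  have hq : q1 γ = A + B := rfl
  rw [hq]
  have hkn : ‖(k : ℂ)‖ = |(k : ℝ)| := by simp
  rcases eq_or_ne m 0 with hm | hm
  · subst hm
    simp
  have hm1 : (1 : ℝ) ≤ |(m : ℝ)| := by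
    have h : (1 : ℤ) ≤ |m| := by
      rcases lt_or_gt_of_ne hm with h | h
      · rw [abs_of_neg h]; omega
      · rw [abs_of_pos h]; omega
    calc (1 : ℝ) ≤ ((|m| : ℤ) : ℝ) := by exact_mod_cast h
      _ = |(m : ℝ)| := by push_cast; simp
  have hmsq : (m : ℝ) ^ 2 = |(m : ℝ)| ^ 2 := (sq_abs _).symm
  rcases le_or_gt |(k : ℝ)| (2 * |(m : ℝ)|) with hcase | hcase
  · -- small k: use boundedness
    have h1 : ‖(k : ℂ) * (γ k - γ (k + m))‖ ≤ |(k : ℝ)| * (2 * A) := by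
      rw [norm_mul, hkn]
      have : ‖γ k - γ (k + m)‖ ≤ 2 * A := by
        calc ‖γ k - γ (k + m)‖ ≤ ‖γ k‖ + ‖γ (k + m)‖ := norm_sub_le _ _
          _ ≤ 2 * A := by linarith [hA k, hA (k + m)]
      exact mul_le_mul_of_nonneg_left this (abs_nonneg _)
    refine h1.trans ?_
    rw [hmsq]
    calc |(k : ℝ)| * (2 * A) ≤ (2 * |(m : ℝ)|) * (2 * A) :=
          mul_le_mul_of_nonneg_right hcase (by linarith)
      _ = 4 * |(m : ℝ)| * A := by ring
      _ ≤ 4 * |(m : ℝ)| ^ 2 * (A + B) := by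
          nlinarith [mul_nonneg (mul_nonneg (abs_nonneg ((m : ℝ))) (by linarith : (0:ℝ) ≤ |(m : ℝ)| - 1)) hA0,
            mul_nonneg (sq_nonneg |(m : ℝ)|) hB0]
  · -- large k: telescoping
    have hc : (0 : ℝ) < |(k : ℝ)| / 2 := by linarith
    have key : ‖γ k - γ (k + m)‖ ≤ |(m : ℝ)| * (B / (|(k : ℝ)| / 2)) := by
      rcases lt_or_gt_of_ne hm with hneg | hpos
      · -- m < 0
        set n : ℕ := (-m).toNat with hn
        have hnm : (n : ℤ) = -m := Int.toNat_of_nonneg (by omega)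
        have hend : (k + m) + (n : ℤ) = k := by omega
        have hjs : ∀ i : ℕ, i < n → |(k : ℝ)| / 2 ≤ |(((k + m) + i : ℤ) : ℝ)| := by
          intro i hi
          have hi' : (i : ℤ) < -m := by omega
          have hlt : m + (i : ℤ) < 0 := by omega
          have habs : |m + (i : ℤ)| ≤ |m| := by
            rw [abs_of_neg hlt, abs_of_neg hneg]; omega
          have habsR : |(m : ℝ) + (i : ℝ)| ≤ |(m : ℝ)| := by
            have := habs
            calc |(m : ℝ) + (i : ℝ)| = ((|m + (i:ℤ)| : ℤ) : ℝ) := by push_cast; simp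
              _ ≤ ((|m| : ℤ) : ℝ) := by exact_mod_cast habs
              _ = |(m : ℝ)| := by push_cast; simp
          have htri : |(k : ℝ)| - |(m : ℝ) + (i : ℝ)| ≤ |(k : ℝ) + ((m : ℝ) + (i : ℝ))| := by
            have h := abs_sub_abs_le_abs_sub ((k : ℝ)) (-((m : ℝ) + (i : ℝ)))
            rw [abs_neg, sub_neg_eq_add] at h
            exact h
          have : |(k : ℝ)| / 2 ≤ |(k : ℝ) + ((m : ℝ) + (i : ℝ))| := by linarith
          convert this using 2
          push_cast; ring
        have hb := block γ B hB (k + m) n (|(k : ℝ)| / 2) hc hjs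
        rw [hend] at hb
        have hnR : (n : ℝ) = |(m : ℝ)| := by
          have h2 : ((n : ℤ) : ℝ) = ((-m : ℤ) : ℝ) := by rw [hnm]
          push_cast at h2
          rw [h2, abs_of_neg (by exact_mod_cast hneg)]
        calc ‖γ k - γ (k + m)‖ = ‖γ (k + m) - γ k‖ := norm_sub_rev _ _
          _ ≤ n * (B / (|(k : ℝ)| / 2)) := hb
          _ = |(m : ℝ)| * (B / (|(k : ℝ)| / 2)) := by rw [hnR]
      · -- m > 0
        set n : ℕ := m.toNat with hn
        have hnm : (n : ℤ) = m := Int.toNat_of_nonneg (by omega)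
        have hjs : ∀ i : ℕ, i < n → |(k : ℝ)| / 2 ≤ |((k + i : ℤ) : ℝ)| := by
          intro i hi
          have hi' : (i : ℤ) < m := by omega
          have hiR : (i : ℝ) ≤ |(m : ℝ)| := by
            rw [abs_of_pos (by exact_mod_cast hpos)]
            exact_mod_cast hi'.le
          have htri : |(k : ℝ)| - (i : ℝ) ≤ |(k : ℝ) + (i : ℝ)| := by
            have h := abs_sub_abs_le_abs_sub ((k : ℝ)) (-(i : ℝ))
            rw [abs_neg, sub_neg_eq_add, abs_of_nonneg (by positivity : (0:ℝ) ≤ (i:ℝ))] at h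
            exact h
          have : |(k : ℝ)| / 2 ≤ |(k : ℝ) + (i : ℝ)| := by linarith
          convert this using 2
          push_cast; ring
        have hb := block γ B hB k n (|(k : ℝ)| / 2) hc hjs
        rw [hnm] at hb
        have hnR : (n : ℝ) = |(m : ℝ)| := by
          rw [abs_of_pos (by exact_mod_cast hpos)]
          exact_mod_cast hnm
        rw [hnR] at hb
        exact hb
    have h1 : ‖(k : ℂ) * (γ k - γ (k + m))‖ ≤ |(k : ℝ)| * (|(m : ℝ)| * (B / (|(k : ℝ)| / 2))) := by
      rw [norm_mul, hkn]
      exact mul_le_mul_of_nonneg_left key (abs_nonneg _)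
    refine h1.trans ?_
    have hk0 : |(k : ℝ)| ≠ 0 := by linarith
    have heq : |(k : ℝ)| * (|(m : ℝ)| * (B / (|(k : ℝ)| / 2))) = 2 * |(m : ℝ)| * B := by
      field_simp
    rw [heq, hmsq]
    nlinarith [mul_nonneg hA0 (sq_nonneg |(m : ℝ)|),
      mul_le_mul_of_nonneg_right (mul_le_mul_of_nonneg_left hm1 (abs_nonneg ((m : ℝ)))) hB0,
      mul_nonneg (sq_nonneg |(m : ℝ)|) hB0, mul_nonneg (sq_nonneg |(m : ℝ)|) hA0]
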